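/- Let α, β ∈ ℂ with |α|² + |β|² = 1 and set ψ = (α, β) ∈ ℂ². Define the Bell states Φ₀₀ = (e₀₀ + e₁₁)/√2, Φ₀₁ = (e₀₀ − e₁₁)/√2, Φ₁₀ = (e₀₁ + e₁₀)/√2, Φ₁₁ = (e₀₁ − e₁₀)/√2 as functions Fin 2 × Fin 2 → ℂ. Then for every choice of s₁, s₂ ∈ {0,1}, the probability of Bell-measurement outcome (s₁, s₂) on the first two qubits of |ψ⟩ ⊗ |Φ⁺⟩ equals 1/4; explicitly, Σ_{b ∈ Fin 2} | Σ_{a′, a ∈ Fin 2} conj(Φ_{s₁ s₂}(a′, a)) · ψ(a′) · Φ₀₀(a, b) |² = 1/4. Consequently the two classical bits S₁, S₂ produced by the Bell measurement are independent and identically distributed uniform bits. -/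

import Mathlib

open Matrix

/-- Standard basis function on `Fin 2 × Fin 2`: value 1 at `(j,k)`, 0 elsewhere. -/
noncomputable def stdBasisFun (j k : Fin 2) : Fin 2 × Fin 2 → ℂ :=
  fun p => if p = (j, k) then 1 else 0

/-- The Bell states `Φ_{s₁ s₂}` as functions `Fin 2 × Fin 2 → ℂ`. -/
noncomputable def BellState (s₁ s₂ : Fin 2) : Fin 2 × Fin 2 → ℂ :=
  if s₁ = 0 then
    (if s₂ = 0 then
      fun p => (stdBasisFun 0 0 p + stdBasisFun 1 1 p) / Real.sqrt 2
    else
      fun p => (stdBasisFun 0 0 p - stdBasisFun 1 1 p) / Real.sqrt 2)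
  else
    (if s₂ = 0 then
      fun p => (stdBasisFun 0 1 p + stdBasisFun 1 0 p) / Real.sqrt 2
    else
      fun p => (stdBasisFun 0 1 p - stdBasisFun 1 0 p) / Real.sqrt 2)

/-- Each Bell-measurement outcome `(s₁, s₂)` on the first two qubits of
`|ψ⟩ ⊗ |Φ⁺⟩` occurs with probability `1/4`: the classical bits from the Bell
measurement are i.i.d. uniform. -/
theorem bell_outcomes_uniform (α β : ℂ)
    (hnorm : ‖α‖ ^ 2 + ‖β‖ ^ 2 = 1) :
    let ψ : Fin 2 → ℂ := ![α, β]
    ∀ s₁ s₂ : Fin 2,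
      ∑ b : Fin 2,
        ‖∑ a' : Fin 2, ∑ a : Fin 2,
          (starRingEnd ℂ) (BellState s₁ s₂ (a', a)) * ψ a' *
            BellState 0 0 (a, b)‖ ^ 2 = 1 / 4 := by
  intro ψ s₁ s₂
  have h2 : (Real.sqrt 2 : ℂ) ≠ 0 := by
    simp [Complex.ofReal_ne_zero, Real.sqrt_eq_zero']
  fin_cases s₁ <;> fin_cases s₂ <;>
    simp [BellState, stdBasisFun, Fin.sum_univ_two, Prod.ext_iff, ψ, map_div₀,
      Complex.norm_def, Complex.sq_norm] <;>
  · rw [← Complex.norm_def, ← Complex.norm_def]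
    have h2' : (Real.sqrt 2)^2 = 2 := Real.sq_sqrt (by norm_num)
    field_simp
    nlinarith [hnorm]
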